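/- Let (A,B,C,D) be a linear system satisfying the reciprocity relations with respect to a signature matrix σ and an invertible symmetric G: AᵀG = GA, BᵀG = σC, σD = Dᵀσ. Let (x,u,y) be a trajectory defined on all of ℝ, i.e., x : ℝ → ℝⁿ differentiable with x'(t) = Ax(t) + Bu(t) and y(t) = Cx(t) + Du(t). Then for every t, the function t ↦ x(−t)ᵀG x(t) is differentiable with derivative −u(−t)ᵀσy(t) + y(−t)ᵀσu(t). -/

import Mathlib

open Matrix

private lemma hasDerivAt_dotProduct' {k : ℕ} {f g : ℝ → Fin k → ℝ} {f' g' : Fin k → ℝ} {t : ℝ}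
    (hf : HasDerivAt f f' t) (hg : HasDerivAt g g' t) :
    HasDerivAt (fun s => f s ⬝ᵥ g s) (f' ⬝ᵥ g t + f t ⬝ᵥ g') t := by
  have h : HasDerivAt (fun s => ∑ i, f s i * g s i)
      (∑ i, (f' i * g t i + f t i * g' i)) t :=
    HasDerivAt.fun_sum fun i _ => ((hasDerivAt_pi.1 hf) i).mul ((hasDerivAt_pi.1 hg) i)
  simpa [dotProduct, Finset.sum_add_distrib] using h

private lemma hasDerivAt_mulVec' {k l : ℕ} {f : ℝ → Fin k → ℝ} {f' : Fin k → ℝ} {t : ℝ}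
    (M : Matrix (Fin l) (Fin k) ℝ) (hf : HasDerivAt f f' t) :
    HasDerivAt (fun s => M *ᵥ f s) (M *ᵥ f') t := by
  refine hasDerivAt_pi.2 fun i => ?_
  have h : HasDerivAt (fun s => ∑ j, M i j * f s j) (∑ j, M i j * f' j) t :=
    HasDerivAt.fun_sum fun j _ => ((hasDerivAt_pi.1 hf) j).const_mul _
  simpa [mulVec, dotProduct] using h

private lemma dp_swap {k l : ℕ} (M : Matrix (Fin k) (Fin l) ℝ) (a : Fin k → ℝ) (b : Fin l → ℝ) :
    a ⬝ᵥ (M *ᵥ b) = (Mᵀ *ᵥ a) ⬝ᵥ b := by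
  rw [dotProduct_mulVec, mulVec_transpose]

private lemma dp_swap' {k l : ℕ} (M : Matrix (Fin k) (Fin l) ℝ) (a : Fin l → ℝ) (b : Fin k → ℝ) :
    (M *ᵥ a) ⬝ᵥ b = a ⬝ᵥ (Mᵀ *ᵥ b) := by
  rw [dp_swap, transpose_transpose]

/-- For a reciprocal system, along any trajectory `(x,u,y)` defined on all of `ℝ`,
`d/dt (x(-t)ᵀ G x(t)) = -u(-t)ᵀ σ y(t) + y(-t)ᵀ σ u(t)`. -/
theorem reciprocal_time_reversed_identity {n m : ℕ}
    (A : Matrix (Fin n) (Fin n) ℝ) (B : Matrix (Fin n) (Fin m) ℝ)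
    (C : Matrix (Fin m) (Fin n) ℝ) (D : Matrix (Fin m) (Fin m) ℝ)
    (σ : Matrix (Fin m) (Fin m) ℝ) (hσdiag : σ.IsDiag)
    (hσsign : ∀ i, σ i i = 1 ∨ σ i i = -1)
    (G : Matrix (Fin n) (Fin n) ℝ) (hGsym : Gᵀ = G) (hGinv : IsUnit G)
    (hrec1 : Aᵀ * G = G * A) (hrec2 : Bᵀ * G = σ * C) (hrec3 : σ * D = Dᵀ * σ)
    (x : ℝ → Fin n → ℝ) (u : ℝ → Fin m → ℝ) (y : ℝ → Fin m → ℝ)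
    (hx : ∀ t, HasDerivAt x (A *ᵥ x t + B *ᵥ u t) t)
    (hy : ∀ t, y t = C *ᵥ x t + D *ᵥ u t) :
    ∀ t, HasDerivAt (fun s => x (-s) ⬝ᵥ (G *ᵥ x s))
      (-(u (-t) ⬝ᵥ (σ *ᵥ y t)) + y (-t) ⬝ᵥ (σ *ᵥ u t)) t := by
  intro t
  have hσsym : σᵀ = σ := hσdiag.isSymm
  have h1 : HasDerivAt (fun s => x (-s))
      ((-1 : ℝ) • (A *ᵥ x (-t) + B *ᵥ u (-t))) t :=
    (hx (-t)).scomp t (hasDerivAt_neg t)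
  have h2 : HasDerivAt (fun s => G *ᵥ x s) (G *ᵥ (A *ᵥ x t + B *ᵥ u t)) t :=
    hasDerivAt_mulVec' G (hx t)
  have h := hasDerivAt_dotProduct' h1 h2
  convert h using 1
  rw [hy t, hy (-t)]
  have hGB : G * B = Cᵀ * σ := by
    have h' := congrArg Matrix.transpose hrec2
    rw [Matrix.transpose_mul, Matrix.transpose_mul, hGsym, hσsym, transpose_transpose] at h'
    exact h'
  simp only [neg_smul, one_smul, neg_dotProduct, dotProduct_neg, mulVec_add,
    add_dotProduct, dotProduct_add, ← mulVec_mulVec]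
  rw [dp_swap' A, dp_swap' B, dp_swap' D, mulVec_mulVec _ Aᵀ G, mulVec_mulVec _ Bᵀ G,
    mulVec_mulVec _ Dᵀ σ, mulVec_mulVec _ G B, hrec1, hrec2, ← hrec3, hGB,
    ← mulVec_mulVec _ G A, ← mulVec_mulVec _ σ C, ← mulVec_mulVec _ σ D, ← mulVec_mulVec _ Cᵀ σ,
    dp_swap Cᵀ, transpose_transpose]
  ring
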